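/- Let E be a normed vector lattice whose positive unit ball is upward directed, and let F be an order continuous Banach lattice. If T : E → F is norm to order bounded and t_T := sup{|T|x : x ∈ E⁺, ‖x‖ ≤ 1} (which exists in F), then the regular norm of T satisfies ‖T‖_r = ‖t_T‖. -/

import Mathlib

/-- Let `E` be a normed vector lattice whose positive unit ball is
upward directed and `F` an order continuous Banach lattice. If `T` is norm to
order bounded, `absT = |T|` (Riesz–Kantorovich), and
`t_T = sup {|T|x : x ∈ E⁺, ‖x‖ ≤ 1}`, then the regular norm
`‖T‖_r = ‖|T|‖ = sup {‖|T|x‖ : ‖x‖ ≤ 1}` equals `‖t_T‖`. -/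
theorem stmt_6 {E F : Type*}
    [NormedAddCommGroup E] [Lattice E] [IsOrderedAddMonoid E] [HasSolidNorm E] [NormedSpace ℝ E]
    [NormedAddCommGroup F] [Lattice F] [IsOrderedAddMonoid F] [HasSolidNorm F] [NormedSpace ℝ F] [CompleteSpace F]
    (hdir : DirectedOn (· ≤ ·) {x : E | 0 ≤ x ∧ ‖x‖ ≤ 1})
    (hoc : ∀ A : Set F, A.Nonempty → DirectedOn (· ≥ ·) A → IsGLB A 0 →
      ∀ ε > 0, ∃ a ∈ A, ‖a‖ < ε)
    (T absT : E →ₗ[ℝ] F) (t : F) (ht0 : 0 ≤ t)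
    (hT : ∀ x : E, |T x| ≤ ‖x‖ • t)
    (habsT : ∀ x : E, 0 ≤ x →
      IsLUB {z : F | ∃ y : E, |y| ≤ x ∧ z = |T y|} (absT x))
    (tT : F)
    (htT : IsLUB {z : F | ∃ x : E, 0 ≤ x ∧ ‖x‖ ≤ 1 ∧ z = absT x} tT) :
    sSup {r : ℝ | ∃ x : E, ‖x‖ ≤ 1 ∧ r = ‖absT x‖} = ‖tT‖ := by
  -- absT is nonnegative on nonnegative elements
  have habs_pos : ∀ x : E, 0 ≤ x → 0 ≤ absT x := by
    intro x hx
    exact (habsT x hx).1 ⟨0, by simpa using hx, by simp⟩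
  -- absT is monotone on nonnegatives
  have habs_mono : ∀ x y : E, x ≤ y → 0 ≤ absT y - absT x := by
    intro x y hxy
    have h := habs_pos (y - x) (sub_nonneg.mpr hxy)
    rwa [map_sub] at h
  -- key pointwise bound : |absT x| ≤ absT |x|
  have hkey : ∀ x : E, |absT x| ≤ absT |x| := by
    intro x
    have hp : 0 ≤ absT x⁺ := habs_pos _ (posPart_nonneg x)
    have hn : 0 ≤ absT x⁻ := habs_pos _ (negPart_nonneg x)
    have hx : absT x = absT x⁺ - absT x⁻ := by
      rw [← map_sub, posPart_sub_negPart]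
    have habsx : absT |x| = absT x⁺ + absT x⁻ := by
      rw [← map_add, posPart_add_negPart]
    rw [hx, habsx]
    refine abs_le'.mpr ⟨?_, ?_⟩
    · calc absT x⁺ - absT x⁻ = absT x⁺ + -absT x⁻ := sub_eq_add_neg _ _
        _ ≤ absT x⁺ + absT x⁻ := add_le_add_right ((neg_nonpos.mpr hn).trans hn) _
    · calc -(absT x⁺ - absT x⁻) = absT x⁻ + -absT x⁺ := by abel
        _ ≤ absT x⁻ + absT x⁺ := add_le_add_right ((neg_nonpos.mpr hp).trans hp) _
        _ = absT x⁺ + absT x⁻ := add_comm _ _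
  -- tT is nonnegative
  have htT0 : 0 ≤ tT := htT.1 ⟨0, le_rfl, by simp, by simp⟩
  -- every element of the sup set is ≤ ‖tT‖
  have hub : ∀ r ∈ {r : ℝ | ∃ x : E, ‖x‖ ≤ 1 ∧ r = ‖absT x‖}, r ≤ ‖tT‖ := by
    rintro r ⟨x, hx1, rfl⟩
    have h1 : absT |x| ≤ tT :=
      htT.1 ⟨|x|, abs_nonneg x, by rwa [norm_abs_eq_norm], rfl⟩
    have h2 : |absT x| ≤ |tT| := by
      rw [abs_of_nonneg htT0]
      exact (hkey x).trans h1
    exact HasSolidNorm.solid h2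
  have hne : (0:ℝ) ∈ {r : ℝ | ∃ x : E, ‖x‖ ≤ 1 ∧ r = ‖absT x‖} :=
    ⟨0, by simp, by simp⟩
  have hbdd : BddAbove {r : ℝ | ∃ x : E, ‖x‖ ≤ 1 ∧ r = ‖absT x‖} := ⟨‖tT‖, hub⟩
  refine le_antisymm (csSup_le ⟨0, hne⟩ hub) ?_
  -- reverse inequality via order continuity
  refine le_of_forall_pos_le_add ?_
  intro ε hε
  set A : Set F := (fun s => tT - s) '' {z : F | ∃ x : E, 0 ≤ x ∧ ‖x‖ ≤ 1 ∧ z = absT x} with hA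
  have hAne : A.Nonempty := ⟨tT - absT 0, ⟨absT 0, ⟨0, le_rfl, by simp, rfl⟩, rfl⟩⟩
  have hAdir : DirectedOn (· ≥ ·) A := by
    rintro _ ⟨_, ⟨x, hx0, hx1, rfl⟩, rfl⟩ _ ⟨_, ⟨y, hy0, hy1, rfl⟩, rfl⟩
    obtain ⟨z, ⟨hz0, hz1⟩, hxz, hyz⟩ := hdir x ⟨hx0, hx1⟩ y ⟨hy0, hy1⟩
    exact ⟨tT - absT z, ⟨absT z, ⟨z, hz0, hz1, rfl⟩, rfl⟩,
      sub_le_sub_left (sub_nonneg.mp (habs_mono x z hxz)) tT,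
      sub_le_sub_left (sub_nonneg.mp (habs_mono y z hyz)) tT⟩
  have hAglb : IsGLB A 0 := by
    constructor
    · rintro _ ⟨s, hs, rfl⟩
      exact sub_nonneg.mpr (htT.1 hs)
    · intro b hb
      have h : tT ≤ tT - b := htT.2 (fun s hs => le_sub_comm.mp (hb ⟨s, hs, rfl⟩))
      exact (le_sub_self_iff tT).mp h
  obtain ⟨a, ⟨s, ⟨x, hx0, hx1, rfl⟩, rfl⟩, ha⟩ := hoc A hAne hAdir hAglb ε hε
  have hmem : ‖absT x‖ ∈ {r : ℝ | ∃ x : E, ‖x‖ ≤ 1 ∧ r = ‖absT x‖} := ⟨x, hx1, rfl⟩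
  calc ‖tT‖ ≤ ‖tT - absT x‖ + ‖absT x‖ := by
        simpa using norm_add_le (tT - absT x) (absT x)
    _ ≤ ‖absT x‖ + ε := by linarith
    _ ≤ sSup {r : ℝ | ∃ x : E, ‖x‖ ≤ 1 ∧ r = ‖absT x‖} + ε :=
        add_le_add_left (le_csSup hbdd hmem) ε
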